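/- Let r, m, a, b, i be positive integers with a ≥ 2, b ≥ 1, 0 ≤ m ≤ r-2, r ≥ 3, satisfying a(r-n-1) = m+2 with n = 1 and b(r-m-1) = n+2+i-r-1 with n = 1 and i ≤ r+1 and i = (r+1)b - (r-2)(ab-1). Then exactly one of the following holds: (r,a,m) = (4,2,2) with b ∈ {1,2,3} and i = b+2; (r,a,m) = (3,3,1) with b ∈ {1,2,3} and i = b+1; or (r,a,m) = (3,2,0) with b = 1 and i = 3. -/
import Mathlib


theorem stmt_2 (r m a b i : ℤ)
    (ha : 2 ≤ a) (hb : 1 ≤ b) (hm1 : 0 ≤ m) (hm2 : m ≤ r - 2) (hr : 3 ≤ r)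
    (hi : 0 < i) (hile : i ≤ r + 1)
    (h1 : a * (r - 1 - 1) = m + 2)
    (h2 : b * (r - m - 1) = 1 + 2 + i - r - 1)
    (h3 : i = (r + 1) * b - (r - 2) * (a * b - 1)) :
    (r = 4 ∧ a = 2 ∧ m = 2 ∧ (b = 1 ∨ b = 2 ∨ b = 3) ∧ i = b + 2) ∨
    (r = 3 ∧ a = 3 ∧ m = 1 ∧ (b = 1 ∨ b = 2 ∨ b = 3) ∧ i = b + 1) ∨
    (r = 3 ∧ a = 2 ∧ m = 0 ∧ b = 1 ∧ i = 3) := by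
  have hr4 : r ≤ 4 := by nlinarith
  interval_cases r
  · -- r = 3
    have ham : a = m + 2 := by linarith
    have hm' : m ≤ 1 := by omega
    interval_cases m
    · have ha2 : a = 2 := by omega
      subst ha2
      omega
    · have ha3 : a = 3 := by omega
      subst ha3
      omega
  · -- r = 4
    have ha2 : a = 2 := by nlinarith
    have hm' : m = 2 := by omega
    subst ha2
    omega
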